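/- If G is a Hamilton connected graph on at least 3 vertices, then G □ C_k is Hamilton connected for every k ≥ 1. -/

import Mathlib

open Matrix Finset

/-- A graph is Hamilton connected if any two distinct vertices are joined by a Hamilton path. -/
def HamConn {V : Type*} [DecidableEq V] (G : SimpleGraph V) : Prop :=
  ∀ x y : V, x ≠ y → ∃ p : G.Walk x y, p.IsHamiltonian

/-- A bipartite graph is Hamilton laceable: there is a proper 2-coloring such that any two
vertices of different colors are joined by a Hamilton path. -/
def HamLaceable {V : Type*} [DecidableEq V] (G : SimpleGraph V) : Prop :=
  ∃ c : V → Bool, (∀ ⦃x y⦄, G.Adj x y → c x ≠ c y) ∧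
    ∀ x y : V, c x ≠ c y → ∃ p : G.Walk x y, p.IsHamiltonian

/-- The undirected Cayley graph of a group with connection set `S` (acting on the left). -/
def cayley {G : Type*} [Group G] (S : Set G) : SimpleGraph G :=
  SimpleGraph.fromRel (fun x y => ∃ s ∈ S, y = s * x)

/-- The set of row operations specified by a transition graph `E` on `[n]` together with
row multiplications/divisions by `α`: elementary matrices `A_{ij}`, `A_{ij}⁻¹` for edges
`(i,j)` of `E`, and `M_i`, `M_i⁻¹` for all `i`. -/
def ops (n : ℕ) (F : Type*) [Field F] (E : Fin n → Fin n → Prop) (α : F) :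
    Set (Matrix.GeneralLinearGroup (Fin n) F) :=
  {A | (∃ i j, E i j ∧ ((A : Matrix (Fin n) (Fin n) F) = 1 + Matrix.single j i 1 ∨
        (A : Matrix (Fin n) (Fin n) F) = 1 + Matrix.single j i (-1))) ∨
      (∃ i, (A : Matrix (Fin n) (Fin n) F) = 1 + Matrix.single i i (α - 1) ∨
        (A : Matrix (Fin n) (Fin n) F) = 1 + Matrix.single i i (α⁻¹ - 1))}

/-- Bypass transition graphs: a single vertex, or obtained from a bypass transition graph
on `[n-1]` by adding the vertex `n` with an in-edge from some `i ∈ [n-1]` and an out-edge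
to some `j ∈ [n-1]`. -/
inductive IsBypass : (n : ℕ) → (Fin n → Fin n → Prop) → Prop
  | single (E : Fin 1 → Fin 1 → Prop) : IsBypass 1 E
  | step (n : ℕ) (E : Fin (n + 1) → Fin (n + 1) → Prop)
      (hin : ∃ i : Fin n, E i.castSucc (Fin.last n))
      (hout : ∃ j : Fin n, E (Fin.last n) j.castSucc)
      (hrec : IsBypass n (fun a b => E a.castSucc b.castSucc)) :
      IsBypass (n + 1) E

section BoxProdCycle

set_option linter.unusedSectionVars false

open SimpleGraph

variable {V : Type*} [Fintype V] [DecidableEq V] {G : SimpleGraph V}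

/-- `p` is a path whose support is exactly the set of vertices satisfying `Q`. -/
def CovW {W : Type*} [DecidableEq W] {H : SimpleGraph W} {a b : W} (p : H.Walk a b)
    (Q : W → Prop) : Prop :=
  p.support.Nodup ∧ ∀ z, z ∈ p.support ↔ Q z

lemma CovW.congr {W : Type*} [DecidableEq W] {H : SimpleGraph W} {a b : W} {p : H.Walk a b}
    {Q Q' : W → Prop} (h : CovW p Q) (h' : ∀ z, Q z ↔ Q' z) : CovW p Q' :=
  ⟨h.1, fun z => (h.2 z).trans (h' z)⟩

lemma CovW.append {W : Type*} [DecidableEq W] {H : SimpleGraph W} {a m b : W}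
    {p : H.Walk a m} {q : H.Walk m b} {Q R : W → Prop}
    (hp : CovW p Q) (hq : CovW q R) (hmid : ∀ z, Q z → R z → z = m) :
    CovW (p.append q) (fun z => Q z ∨ R z) := by
  have hq' := q.support_eq_cons
  have hnd := hq.1
  rw [hq'] at hnd
  have hqnd : q.support.tail.Nodup := (List.nodup_cons.mp hnd).2
  have hmnot : m ∉ q.support.tail := (List.nodup_cons.mp hnd).1
  constructor
  · rw [SimpleGraph.Walk.support_append]
    refine List.Nodup.append hp.1 hqnd ?_
    intro z hz1 hz2
    have hzq : z ∈ q.support := by rw [hq']; exact List.mem_cons_of_mem _ hz2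
    have hzm : z = m := hmid z ((hp.2 z).1 hz1) ((hq.2 z).1 hzq)
    subst hzm; exact hmnot hz2
  · intro z
    rw [SimpleGraph.Walk.support_append, List.mem_append]
    constructor
    · rintro (hz | hz)
      · exact Or.inl ((hp.2 z).1 hz)
      · refine Or.inr ((hq.2 z).1 ?_); rw [hq']; exact List.mem_cons_of_mem _ hz
    · rintro (hz | hz)
      · exact Or.inl ((hp.2 z).2 hz)
      · have hzq : z ∈ q.support := (hq.2 z).2 hz
        rw [hq'] at hzq
        rcases List.mem_cons.mp hzq with rfl | hzq
        · exact Or.inl p.end_mem_support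
        · exact Or.inr hzq

lemma CovW.cons {W : Type*} [DecidableEq W] {H : SimpleGraph W} {a c b : W} (h : H.Adj a c)
    {p : H.Walk c b} {Q : W → Prop} (hp : CovW p Q) (ha : ¬ Q a) :
    CovW (SimpleGraph.Walk.cons h p) (fun z => z = a ∨ Q z) := by
  constructor
  · rw [SimpleGraph.Walk.support_cons]
    exact List.nodup_cons.mpr ⟨fun hmem => ha ((hp.2 a).1 hmem), hp.1⟩
  · intro z
    rw [SimpleGraph.Walk.support_cons, List.mem_cons]
    exact or_congr Iff.rfl (hp.2 z)

lemma covW_boxProdLeft {k : ℕ} {u v : V} (i : Fin k) (p : G.Walk u v)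
    (hp : p.support.Nodup) :
    CovW (p.boxProdLeft (H := cycleGraph k) i) (fun z => z.2 = i ∧ z.1 ∈ p.support) := by
  have hsupp : (p.boxProdLeft (H := cycleGraph k) i).support
      = p.support.map (fun w => (w, i)) := by
    simp [SimpleGraph.Walk.boxProdLeft, SimpleGraph.Walk.support_map]
    exact SimpleGraph.Walk.support_map _ _
  constructor
  · rw [hsupp]
    exact hp.map (fun w₁ w₂ hw => (Prod.ext_iff.mp hw).1)
  · intro z
    rw [hsupp, List.mem_map]
    constructor
    · rintro ⟨w, hw, rfl⟩; exact ⟨rfl, hw⟩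
    · rintro ⟨h2, h1⟩
      exact ⟨z.1, h1, by rw [← h2]⟩

lemma cycle_adj_succ {k s t : ℕ} (hst : s + 1 = t) (ht : t < k) :
    (cycleGraph k).Adj ⟨s, by omega⟩ ⟨t, ht⟩ := by
  rw [cycleGraph_adj']
  right
  rw [Fin.sub_def]
  show (k - s + t) % k = 1
  have h1 : k - s + t = k + 1 := by omega
  rw [h1, Nat.add_mod_left]
  exact Nat.mod_eq_of_lt (by omega)

lemma exists_third (hV : 3 ≤ Fintype.card V) (u v : V) : ∃ e : V, e ≠ u ∧ e ≠ v := by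
  by_contra hc
  push_neg at hc
  have hsub : (Finset.univ : Finset V) ⊆ {u, v} := by
    intro e _
    rcases eq_or_ne e u with rfl | he
    · simp
    · simp [hc e he]
  have hle := Finset.card_le_card hsub
  have h2 : ({u, v} : Finset V).card ≤ 2 :=
    (Finset.card_insert_le _ _).trans (by simp)
  rw [Finset.card_univ] at hle
  omega

lemma tower (hG : HamConn G) {k : ℕ} :
    ∀ (d s t : ℕ) (hs : s < k), s + d = t → t < k → ∀ u v : V, u ≠ v →
      ∃ p : (G.boxProd (cycleGraph k)).Walk (u, ⟨s, hs⟩) (v, ⟨s, hs⟩),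
        CovW p (fun z => s ≤ (z.2 : ℕ) ∧ (z.2 : ℕ) ≤ t) := by
  intro d
  induction d with
  | zero =>
    intro s t hs hst ht u v huv
    obtain rfl : s = t := by omega
    obtain ⟨P, hP⟩ := hG u v huv
    refine ⟨P.boxProdLeft (H := SimpleGraph.cycleGraph k) ⟨s, hs⟩, (covW_boxProdLeft _ _ hP.isPath.support_nodup).congr ?_⟩
    intro z
    constructor
    · rintro ⟨h2, _⟩
      have : (z.2 : ℕ) = s := by rw [h2]
      omega
    · rintro ⟨h1, h2⟩
      exact ⟨Fin.ext (show (z.2 : ℕ) = s by omega), hP.mem_support z.1⟩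
  | succ d ih =>
    intro s t hs hst ht u v huv
    have hs1 : s + 1 < k := by omega
    obtain ⟨P, hP⟩ := hG u v huv
    cases P with
    | nil => exact absurd rfl huv
    | cons hadj P' =>
      rename_i w
      have hw : w ≠ u := hadj.ne'
      have hnd : (SimpleGraph.Walk.cons hadj P').support.Nodup := hP.isPath.support_nodup
      rw [SimpleGraph.Walk.support_cons] at hnd
      have hund : P'.support.Nodup := (List.nodup_cons.mp hnd).2
      have hunot : u ∉ P'.support := (List.nodup_cons.mp hnd).1
      have hmem : ∀ z : V, z ∈ P'.support ↔ z ≠ u := by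
        intro z
        constructor
        · rintro hz rfl; exact hunot hz
        · intro hz
          have hz2 := hP.mem_support z
          rw [SimpleGraph.Walk.support_cons, List.mem_cons] at hz2
          tauto
      obtain ⟨q, hq⟩ := ih (s+1) t hs1 (by omega) ht u w hw.symm
      have hr := covW_boxProdLeft (G := G) (⟨s, hs⟩ : Fin k) P' hund
      have hv0 : (cycleGraph k).Adj ⟨s, hs⟩ ⟨s+1, hs1⟩ := cycle_adj_succ rfl hs1
      have hadj1 : (G.boxProd (cycleGraph k)).Adj (w, ⟨s+1, hs1⟩) (w, ⟨s, hs⟩) :=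
        Or.inr ⟨hv0.symm, rfl⟩
      have hadj0 : (G.boxProd (cycleGraph k)).Adj (u, ⟨s, hs⟩) (u, ⟨s+1, hs1⟩) :=
        Or.inr ⟨hv0, rfl⟩
      have hc2 := CovW.cons hadj1 hr (by
        rintro ⟨h2, _⟩
        have : s = s + 1 := congrArg Fin.val h2.symm
        omega)
      have hc3 := CovW.append hq hc2 (by
        rintro z ⟨hz1, hz2⟩ (hz | ⟨hz, _⟩)
        · exact hz
        · exfalso
          have : (z.2 : ℕ) = s := by rw [hz]
          omega)
      have hc4 := CovW.cons hadj0 hc3 (by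
        rintro (⟨h1, h2⟩ | (h | ⟨h, hmem'⟩))
        · exact absurd h1 (by omega : ¬ (s + 1 ≤ s))
        · have h2 : s = s + 1 := congrArg (fun z : V × Fin k => (z.2 : ℕ)) h
          omega
        · exact hunot (by simpa using hmem'))
      refine ⟨_, hc4.congr ?_⟩
      intro z
      constructor
      · rintro (rfl | (⟨h1, h2⟩ | (rfl | ⟨h2, _⟩)))
        · exact ⟨le_rfl, (by omega : s ≤ t)⟩
        · exact ⟨by omega, h2⟩
        · exact ⟨(by omega : s ≤ s + 1), (by omega : s + 1 ≤ t)⟩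
        · have : (z.2 : ℕ) = s := by rw [h2]
          exact ⟨by omega, by omega⟩
      · rintro ⟨h1, h2⟩
        by_cases hm : s + 1 ≤ (z.2 : ℕ)
        · exact Or.inr (Or.inl ⟨hm, h2⟩)
        · have hzs : z.2 = (⟨s, hs⟩ : Fin k) := Fin.ext (show (z.2 : ℕ) = s by omega)
          by_cases hzu : z.1 = u
          · exact Or.inl (Prod.ext_iff.mpr ⟨hzu, hzs⟩)
          · exact Or.inr (Or.inr (Or.inr ⟨hzs, (hmem z.1).mpr hzu⟩))

lemma snake (hV : 3 ≤ Fintype.card V) (hG : HamConn G) {k : ℕ} :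
    ∀ (d s t : ℕ) (hs : s < k) (ht : t < k), s + d = t → ∀ u v : V, u ≠ v →
      ∃ p : (G.boxProd (cycleGraph k)).Walk (u, ⟨s, hs⟩) (v, ⟨t, ht⟩),
        CovW p (fun z => s ≤ (z.2 : ℕ) ∧ (z.2 : ℕ) ≤ t) := by
  intro d
  induction d with
  | zero =>
    intro s t hs ht hst u v huv
    obtain rfl : s = t := by omega
    obtain ⟨P, hP⟩ := hG u v huv
    refine ⟨P.boxProdLeft (H := SimpleGraph.cycleGraph k) ⟨s, hs⟩, (covW_boxProdLeft _ _ hP.isPath.support_nodup).congr ?_⟩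
    intro z
    constructor
    · rintro ⟨h2, _⟩
      have : (z.2 : ℕ) = s := by rw [h2]
      omega
    · rintro ⟨h1, h2⟩
      exact ⟨Fin.ext (show (z.2 : ℕ) = s by omega), hP.mem_support z.1⟩
  | succ d ih =>
    intro s t hs ht hst u v huv
    obtain ⟨e, heu, hev⟩ := exists_third hV u v
    obtain ⟨P, hP⟩ := hG u e heu.symm
    have hs1 : s + 1 < k := by omega
    obtain ⟨q, hq⟩ := ih (s+1) t hs1 ht (by omega) e v hev
    have hr := covW_boxProdLeft (G := G) (⟨s, hs⟩ : Fin k) P hP.isPath.support_nodup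
    have hadj : (G.boxProd (cycleGraph k)).Adj (e, ⟨s, hs⟩) (e, ⟨s+1, hs1⟩) :=
      Or.inr ⟨cycle_adj_succ rfl hs1, rfl⟩
    have hc2 := CovW.cons hadj hq (by
      rintro ⟨h1, _⟩
      exact absurd h1 (by omega : ¬ (s + 1 ≤ s)))
    have hc3 := CovW.append hr hc2 (by
      rintro z ⟨hz2, _⟩ (hz | ⟨hz1, _⟩)
      · exact hz
      · exfalso
        have : (z.2 : ℕ) = s := by rw [hz2]
        omega)
    refine ⟨_, hc3.congr ?_⟩
    intro z
    constructor
    · rintro (⟨h2, _⟩ | (rfl | ⟨h1, h2⟩))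
      · have : (z.2 : ℕ) = s := by rw [h2]
        omega
      · exact ⟨le_rfl, (by omega : s ≤ t)⟩
      · exact ⟨by omega, h2⟩
    · rintro ⟨h1, h2⟩
      by_cases hm : s + 1 ≤ (z.2 : ℕ)
      · exact Or.inr (Or.inr ⟨hm, h2⟩)
      · exact Or.inl ⟨Fin.ext (show (z.2 : ℕ) = s by omega), hP.mem_support z.1⟩

lemma main0 (hV : 3 ≤ Fintype.card V) (hG : HamConn G) {k : ℕ} (hk : 0 < k)
    (x y : V) (b : Fin k) (hxy : (b : ℕ) = 0 → x ≠ y) :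
    ∃ p : (G.boxProd (cycleGraph k)).Walk (x, ⟨0, hk⟩) (y, b), p.IsHamiltonian := by
  by_cases hb : (b : ℕ) = 0
  · obtain ⟨p, hp⟩ := tower hG (k-1) 0 (k-1) hk (by omega) (by omega) x y (hxy hb)
    have hend : ((y, (⟨0, hk⟩ : Fin k)) : V × Fin k) = (y, b) :=
      Prod.ext_iff.mpr ⟨rfl, Fin.ext (show (0 : ℕ) = (b : ℕ) by omega)⟩
    refine ⟨p.copy rfl hend, ?_⟩
    intro z
    rw [SimpleGraph.Walk.support_copy]
    have hzm : z ∈ p.support := (hp.2 z).2 ⟨Nat.zero_le _, by have := z.2.isLt; omega⟩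
    exact @List.count_eq_one_of_mem _ instBEqOfDecidableEq _ _ _ hp.1 hzm
  · obtain ⟨e, hex, hey⟩ := exists_third hV x y
    have h1 : (b : ℕ) - 1 < k := by omega
    obtain ⟨p1, hc1⟩ := snake hV hG ((b:ℕ)-1) 0 ((b:ℕ)-1) hk h1 (by omega) x e hex.symm
    obtain ⟨p2, hc2⟩ := tower hG (k-1-(b:ℕ)) (b:ℕ) (k-1) b.isLt (by omega) (by omega) e y hey
    have hadj : (G.boxProd (cycleGraph k)).Adj (e, ⟨(b:ℕ)-1, h1⟩) (e, ⟨(b:ℕ), b.isLt⟩) :=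
      Or.inr ⟨cycle_adj_succ (by omega) b.isLt, rfl⟩
    have hc2' := CovW.cons hadj hc2 (by
      rintro ⟨h2, _⟩
      exact absurd h2 (by omega : ¬ ((b : ℕ) ≤ (b : ℕ) - 1)))
    have hc3 := CovW.append hc1 hc2' (by
      rintro z ⟨_, hz2⟩ (hz | ⟨hz1, _⟩)
      · exact hz
      · exfalso; omega)
    have hend : ((y, (⟨(b:ℕ), b.isLt⟩ : Fin k)) : V × Fin k) = (y, b) :=
      Prod.ext_iff.mpr ⟨rfl, Fin.eta b b.isLt⟩
    refine ⟨(p1.append (SimpleGraph.Walk.cons hadj p2)).copy rfl hend, ?_⟩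
    intro z
    rw [SimpleGraph.Walk.support_copy]
    have hzm : z ∈ (p1.append (SimpleGraph.Walk.cons hadj p2)).support := by
      refine (hc3.2 z).2 ?_
      by_cases hm : (z.2 : ℕ) ≤ (b : ℕ) - 1
      · exact Or.inl ⟨Nat.zero_le _, hm⟩
      · exact Or.inr (Or.inr ⟨by omega, by have := z.2.isLt; omega⟩)
    exact @List.count_eq_one_of_mem _ instBEqOfDecidableEq _ _ _ hc3.1 hzm

end BoxProdCycle

/-- if `G` is Hamilton connected on at least 3 vertices then `G □ C_k` is
Hamilton connected for every `k ≥ 1`. -/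
theorem boxProd_cycle_hamilton_connected {V : Type*} [Fintype V] [DecidableEq V]
    (G : SimpleGraph V) (hV : 3 ≤ Fintype.card V) (hG : HamConn G) (k : ℕ) (hk : 1 ≤ k) :
    HamConn (G.boxProd (SimpleGraph.cycleGraph k)) := by
  haveI : NeZero k := ⟨by omega⟩
  rintro ⟨x, a⟩ ⟨y, b⟩ hne
  have hxy : ((b - a : Fin k) : ℕ) = 0 → x ≠ y := by
    intro h0
    have hba : b = a := by
      have hz : b - a = 0 := Fin.ext (by simp [h0])
      exact sub_eq_zero.mp hz
    rintro rfl
    exact hne (by rw [hba])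
  obtain ⟨p, hp⟩ := main0 hV hG (k := k) hk x y (b - a) hxy
  let ρ : (G.boxProd (SimpleGraph.cycleGraph k)) ≃g (G.boxProd (SimpleGraph.cycleGraph k)) :=
    { toEquiv := (Equiv.refl V).prodCongr (Equiv.addRight a)
      map_rel_iff' := by
        rintro ⟨x1, i⟩ ⟨y1, j⟩
        simp [SimpleGraph.boxProd_adj, SimpleGraph.cycleGraph_adj',
          add_sub_add_right_eq_sub] }
  have h0 : (⟨0, hk⟩ : Fin k) = 0 := Fin.ext (by simp)
  have he1 : ρ.toHom (x, ⟨0, hk⟩) = (x, a) := by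
    show ((x, (⟨0, hk⟩ : Fin k) + a) : V × Fin k) = (x, a)
    rw [h0, zero_add]
  have he2 : ρ.toHom (y, b - a) = (y, b) := by
    show ((y, b - a + a) : V × Fin k) = (y, b)
    rw [sub_add_cancel]
  refine ⟨(p.map ρ.toHom).copy he1 he2, ?_⟩
  intro z
  rw [SimpleGraph.Walk.support_copy]
  exact hp.map ρ.toHom ρ.bijective z
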